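/- Gentle operator lemma for ensembles (Lemma 4): Let X be a finite index set, p : X → ℝ a probability distribution (p(x) ≥ 0, Σ_x p(x) = 1), and for each x let ρ_x be a density matrix over a fixed finite index type; set ρ̄ = Σ_x p(x) ρ_x. Let Λ be a matrix with 0 ≤ Λ ≤ I and suppose Tr[Λ ρ̄] ≥ 1 − ε for some ε ≥ 0. Then Σ_x p(x) ‖√Λ ρ_x √Λ − ρ_x‖₁ ≤ 2√ε, where √Λ is the positive semidefinite square root of Λ. -/

import Mathlib

open scoped Matrix ComplexOrder

/-- The positive semidefinite square root of a positive semidefinite matrix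
(Mathlib's former `Matrix.PosSemidef.sqrt`, removed upstream; old definition restored). -/
noncomputable def Matrix.PosSemidef.sqrt {n : Type*} {𝕜 : Type*} [Fintype n] [RCLike 𝕜]
    [DecidableEq n] {A : Matrix n n 𝕜} (hA : A.PosSemidef) : Matrix n n 𝕜 :=
  hA.1.eigenvectorUnitary * Matrix.diagonal (fun i => ((Real.sqrt (hA.1.eigenvalues i) : ℝ) : 𝕜)) *
    (star hA.1.eigenvectorUnitary : Matrix n n 𝕜)

/-- The trace norm `‖A‖₁ = Tr[√(AᴴA)]` of a complex square matrix. -/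
noncomputable def traceNorm {d : Type*} [Fintype d] [DecidableEq d]
    (A : Matrix d d ℂ) : ℝ :=
  ((Matrix.posSemidef_conjTranspose_mul_self A).sqrt.trace).re

section sqrtPort
open scoped MatrixOrder
variable {d : Type*} [Fintype d] [DecidableEq d]
lemma Matrix.PosSemidef.sqrt_eq_cfcSqrt {A : Matrix d d ℂ} (hA : A.PosSemidef) :
    hA.sqrt = CFC.sqrt A := by
  rw [CFC.sqrt_eq_cfc, cfc_nnreal_eq_real _ A hA.nonneg, hA.1.cfc_eq, Matrix.IsHermitian.cfc,
    Unitary.conjStarAlgAut_apply, Matrix.PosSemidef.sqrt]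
  congr 3
  funext i
  simp [hA.eigenvalues_nonneg i]
lemma Matrix.PosSemidef.posSemidef_sqrt {A : Matrix d d ℂ} (hA : A.PosSemidef) :
    hA.sqrt.PosSemidef := by
  rw [hA.sqrt_eq_cfcSqrt]; exact Matrix.nonneg_iff_posSemidef.mp (CFC.sqrt_nonneg A)
lemma Matrix.PosSemidef.sqrt_mul_self {A : Matrix d d ℂ} (hA : A.PosSemidef) :
    hA.sqrt * hA.sqrt = A := by
  rw [hA.sqrt_eq_cfcSqrt]; exact CFC.sqrt_mul_sqrt_self A hA.nonneg
lemma Matrix.PosSemidef.eq_sqrt_of_sq_eq {A B : Matrix d d ℂ} (hA : A.PosSemidef)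
    (hB : B.PosSemidef) (hAB : A ^ 2 = B) : A = hB.sqrt := by
  rw [hB.sqrt_eq_cfcSqrt]; exact (CFC.sqrt_unique (by rw [← pow_two]; exact hAB) hA.nonneg).symm
end sqrtPort

section helpers
set_option linter.unusedSectionVars false
variable {d : Type*} [Fintype d] [DecidableEq d]


lemma trace_psd_nonneg {A : Matrix d d ℂ} (hA : A.PosSemidef) : 0 ≤ A.trace := by
  rw [Matrix.trace]
  apply Finset.sum_nonneg
  intro i _
  have := hA.dotProduct_mulVec_nonneg (Pi.single i 1)
  simpa [dotProduct, Matrix.mulVec, Pi.single_apply] using this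

lemma trace_mul_psd_nonneg {A B : Matrix d d ℂ} (hA : A.PosSemidef) (hB : B.PosSemidef) :
    0 ≤ (A * B).trace := by
  have h1 : (A * B).trace = (hA.sqrt * B * hA.sqrtᴴ).trace := by
    rw [hA.posSemidef_sqrt.1, Matrix.trace_mul_comm (hA.sqrt * B) hA.sqrt, ← Matrix.mul_assoc,
      hA.sqrt_mul_self]
  rw [h1]
  exact trace_psd_nonneg (hB.mul_mul_conjTranspose_same _)

lemma trace_mul_psd_re_nonneg {A B : Matrix d d ℂ} (hA : A.PosSemidef) (hB : B.PosSemidef) :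
    0 ≤ ((A * B).trace).re :=
  (Complex.le_def.mp (trace_mul_psd_nonneg hA hB)).1


lemma frob_sq (A : Matrix d d ℂ) :
    ((Aᴴ * A).trace).re = ∑ p : d × d, ‖A p.1 p.2‖ ^ 2 := by
  rw [Matrix.trace]
  simp only [Matrix.diag_apply, Matrix.mul_apply, Matrix.conjTranspose_apply]
  rw [Fintype.sum_prod_type]
  rw [Complex.re_sum]
  rw [Finset.sum_comm]
  congr 1; ext i; rw [Complex.re_sum]; congr 1; ext j
  rw [Complex.star_def, ← Complex.normSq_eq_conj_mul_self, Complex.ofReal_re,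
    ← Complex.sq_norm]

lemma trace_CS (C B : Matrix d d ℂ) :
    ((Cᴴ * B).trace).re ≤ Real.sqrt (((Cᴴ * C).trace).re) * Real.sqrt (((Bᴴ * B).trace).re) := by
  classical
  let v : EuclideanSpace ℂ (d × d) := WithLp.toLp 2 (fun p : d × d => C p.1 p.2)
  let w : EuclideanSpace ℂ (d × d) := WithLp.toLp 2 (fun p : d × d => B p.1 p.2)
  have hinner : (Cᴴ * B).trace = inner ℂ v w := by
    rw [Matrix.trace]
    simp only [Matrix.diag_apply, Matrix.mul_apply, Matrix.conjTranspose_apply,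
      PiLp.inner_apply, RCLike.inner_apply]
    rw [Fintype.sum_prod_type, Finset.sum_comm]
    exact Finset.sum_congr rfl fun _ _ => Finset.sum_congr rfl fun _ _ => mul_comm _ _
  have hn : ∀ (M : Matrix d d ℂ) (u : EuclideanSpace ℂ (d × d)),
      (∀ p : d × d, u p = M p.1 p.2) → Real.sqrt (((Mᴴ * M).trace).re) = ‖u‖ := by
    intro M u hu
    rw [frob_sq, EuclideanSpace.norm_eq]
    congr 1
    exact Finset.sum_congr rfl fun p _ => by rw [hu]
  rw [hinner, hn C v (fun p => rfl), hn B w (fun p => rfl)]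
  calc (inner ℂ v w : ℂ).re ≤ ‖(inner ℂ v w : ℂ)‖ := Complex.re_le_norm _
    _ ≤ ‖v‖ * ‖w‖ := norm_inner_le_norm v w


lemma unitary_conj_diag_psd (V : Matrix d d ℂ) (c : d → ℝ) (hc : ∀ i, 0 ≤ c i) :
    (V * Matrix.diagonal (fun i => (c i : ℂ)) * Vᴴ).PosSemidef :=
  (Matrix.posSemidef_diagonal_iff.mpr fun i => by
    simpa using Complex.zero_le_real.mpr (hc i)).mul_mul_conjTranspose_same V

lemma herm_abs_eq {H : Matrix d d ℂ} (hH : H.IsHermitian) :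
    ∃ U ∈ Matrix.unitaryGroup d ℂ,
      (Matrix.posSemidef_conjTranspose_mul_self H).sqrt = U * H := by
  classical
  set V : Matrix d d ℂ := (hH.eigenvectorUnitary : Matrix d d ℂ) with hVdef
  set e := hH.eigenvalues with hedef
  have hV1 : Vᴴ * V = 1 := by
    rw [← Matrix.star_eq_conjTranspose]
    exact Unitary.coe_star_mul_self hH.eigenvectorUnitary
  have hV2 : V * Vᴴ = 1 := by
    rw [← Matrix.star_eq_conjTranspose]
    exact Unitary.coe_mul_star_self hH.eigenvectorUnitary
  have collapse : ∀ (c f : d → ℂ),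
      (V * Matrix.diagonal c * Vᴴ) * (V * Matrix.diagonal f * Vᴴ)
        = V * Matrix.diagonal (fun i => c i * f i) * Vᴴ := by
    intro c f
    simp only [Matrix.mul_assoc]
    rw [← Matrix.mul_assoc Vᴴ V, hV1, Matrix.one_mul, ← Matrix.mul_assoc (Matrix.diagonal c),
      Matrix.diagonal_mul_diagonal]
  have hspec : H = V * Matrix.diagonal (fun i => ((e i : ℝ) : ℂ)) * Vᴴ := by
    have := hH.spectral_theorem
    rw [Unitary.conjStarAlgAut_apply, Matrix.star_eq_conjTranspose] at this
    exact this
  set u : d → ℂ := fun i => if e i < 0 then -1 else 1 with hudef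
  have hustar : ∀ i, star (u i) = u i := by
    intro i; by_cases h : e i < 0 <;> simp [hudef, h]
  have huu : (fun i => u i * u i) = fun _ => (1 : ℂ) := by
    funext i; by_cases h : e i < 0 <;> simp [hudef, h]
  have hDstar : (Matrix.diagonal u)ᴴ = Matrix.diagonal u := by
    rw [Matrix.diagonal_conjTranspose, show star u = u from funext hustar]
  have hUstar : (V * Matrix.diagonal u * Vᴴ)ᴴ = V * Matrix.diagonal u * Vᴴ := by
    rw [Matrix.conjTranspose_mul, Matrix.conjTranspose_mul, Matrix.conjTranspose_conjTranspose,
      hDstar, ← Matrix.mul_assoc]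
  have habs : (fun i => u i * ((e i : ℝ) : ℂ)) = fun i => ((|e i| : ℝ) : ℂ) := by
    funext i
    by_cases h : e i < 0
    · simp [hudef, h, abs_of_neg h]
    · simp [hudef, h, abs_of_nonneg (not_lt.mp h)]
  refine ⟨V * Matrix.diagonal u * Vᴴ, ?_, ?_⟩
  · rw [Matrix.mem_unitaryGroup_iff', Matrix.star_eq_conjTranspose, hUstar, collapse, huu,
      Matrix.diagonal_one, Matrix.mul_one, hV2]
  · have hUH : (V * Matrix.diagonal u * Vᴴ) * H
        = V * Matrix.diagonal (fun i => ((|e i| : ℝ) : ℂ)) * Vᴴ := by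
      conv_lhs => rw [hspec, collapse]
      rw [habs]
    have hpsd : ((V * Matrix.diagonal u * Vᴴ) * H).PosSemidef := by
      rw [hUH]; exact unitary_conj_diag_psd V _ fun i => abs_nonneg _
    have hsq : ((V * Matrix.diagonal u * Vᴴ) * H) ^ 2 = Hᴴ * H := by
      rw [pow_two, hUH, collapse, hH.eq]
      conv_rhs => rw [hspec, collapse]
      have : (fun i => ((|e i| : ℝ) : ℂ) * ((|e i| : ℝ) : ℂ))
          = fun i => ((e i : ℝ) : ℂ) * ((e i : ℝ) : ℂ) := by
        funext i; norm_cast; exact abs_mul_abs_self _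
      rw [this]
    exact (hpsd.eq_sqrt_of_sq_eq (Matrix.posSemidef_conjTranspose_mul_self H) hsq).symm

lemma sub_sq_psd {S : Matrix d d ℂ} (hS : S.PosSemidef)
    (h1 : ((1 : Matrix d d ℂ) - S * S).PosSemidef) : (S - S * S).PosSemidef := by
  classical
  set V : Matrix d d ℂ := (hS.1.eigenvectorUnitary : Matrix d d ℂ) with hVdef
  set e := hS.1.eigenvalues with hedef
  have hV1 : Vᴴ * V = 1 := by
    rw [← Matrix.star_eq_conjTranspose]
    exact Unitary.coe_star_mul_self hS.1.eigenvectorUnitary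
  have collapse : ∀ (c f : d → ℂ),
      (V * Matrix.diagonal c * Vᴴ) * (V * Matrix.diagonal f * Vᴴ)
        = V * Matrix.diagonal (fun i => c i * f i) * Vᴴ := by
    intro c f
    simp only [Matrix.mul_assoc]
    rw [← Matrix.mul_assoc Vᴴ V, hV1, Matrix.one_mul, ← Matrix.mul_assoc (Matrix.diagonal c),
      Matrix.diagonal_mul_diagonal]
  have hspec : S = V * Matrix.diagonal (fun i => ((e i : ℝ) : ℂ)) * Vᴴ := by
    have := hS.1.spectral_theorem
    rw [Unitary.conjStarAlgAut_apply, Matrix.star_eq_conjTranspose] at this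
    exact this
  have he0 : ∀ i, 0 ≤ e i := hS.eigenvalues_nonneg
  have he1 : ∀ i, e i ≤ 1 := by
    intro i
    set v : d → ℂ := ⇑(hS.1.eigenvectorBasis i) with hvdef
    have hSv : S *ᵥ v = (e i : ℂ) • v := by
      have := hS.1.mulVec_eigenvectorBasis i
      convert this using 1
      ext j; simp [hvdef, hedef, Complex.real_smul]
    have hvv : dotProduct (star v) v = 1 := by
      have hnorm := hS.1.eigenvectorBasis.orthonormal.1 i
      have h2 : (inner ℂ (hS.1.eigenvectorBasis i) (hS.1.eigenvectorBasis i) : ℂ) = 1 := by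
        rw [inner_self_eq_norm_sq_to_K, hnorm]; norm_num
      rw [EuclideanSpace.inner_eq_star_dotProduct] at h2
      rw [dotProduct_comm]; exact h2
    have := h1.dotProduct_mulVec_nonneg v
    rw [Matrix.sub_mulVec, dotProduct_sub, Matrix.one_mulVec, hvv] at this
    rw [← Matrix.mulVec_mulVec, hSv, Matrix.mulVec_smul, hSv, smul_smul,
      dotProduct_smul, hvv, smul_eq_mul, mul_one] at this
    have h2 : (0:ℝ) ≤ 1 - e i * e i := by
      have := Complex.le_def.mp this
      simpa using this.1
    nlinarith [he0 i]
  have key : S - S * S = V * Matrix.diagonal (fun i => ((e i - e i * e i : ℝ) : ℂ)) * Vᴴ := by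
    conv_lhs => rw [hspec, collapse]
    rw [← Matrix.sub_mul, ← Matrix.mul_sub]
    congr 2
    ext i j
    rcases eq_or_ne i j with rfl | h
    · simp [Matrix.diagonal_apply]
    · simp [Matrix.diagonal_apply, h]
  rw [key]
  exact unitary_conj_diag_psd V _ fun i => by nlinarith [he0 i, he1 i]

set_option maxHeartbeats 1000000 in
lemma gentle_single {R Λ : Matrix d d ℂ} (hR : R.PosSemidef) (hRtr : R.trace = 1)
    (hΛ : Λ.PosSemidef) (hΛI : ((1 : Matrix d d ℂ) - Λ).PosSemidef) :
    traceNorm (hΛ.sqrt * R * hΛ.sqrt - R)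
      ≤ 2 * Real.sqrt (((((1 : Matrix d d ℂ) - Λ) * R).trace).re) := by
  classical
  set S := hΛ.sqrt with hSdef
  set Q := hR.sqrt with hQdef
  have hSH : Sᴴ = S := hΛ.posSemidef_sqrt.1
  have hQH : Qᴴ = Q := hR.posSemidef_sqrt.1
  have hSS : S * S = Λ := hΛ.sqrt_mul_self
  have hQQ : Q * Q = R := hR.sqrt_mul_self
  have hS1H : (S - 1 : Matrix d d ℂ)ᴴ = S - 1 := by
    rw [Matrix.conjTranspose_sub, hSH, Matrix.conjTranspose_one]
  set s : ℝ := ((((1 : Matrix d d ℂ) - Λ) * R).trace).re with hsdef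
  have hs0 : 0 ≤ s := trace_mul_psd_re_nonneg hΛI hR
  have hH : (S * R * S - R).IsHermitian := by
    apply Matrix.IsHermitian.sub _ hR.1
    show _ = _
    rw [Matrix.conjTranspose_mul, Matrix.conjTranspose_mul, hSH, hR.1.eq, Matrix.mul_assoc]
  obtain ⟨U, hU, hsqrt⟩ := herm_abs_eq hH
  have hUU : Uᴴ * U = 1 := by
    rw [← Matrix.star_eq_conjTranspose]; exact Matrix.mem_unitaryGroup_iff'.mp hU
  have key : ∀ A B : Matrix d d ℂ,
      ((U * (A * B)).trace).re
        ≤ Real.sqrt (((A * Aᴴ).trace).re) * Real.sqrt (((Bᴴ * B).trace).re) := by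
    intro A B
    have h1 : U * (A * B) = (Aᴴ * Uᴴ)ᴴ * B := by
      simp only [Matrix.conjTranspose_mul, Matrix.conjTranspose_conjTranspose, Matrix.mul_assoc]
    have h2 : ((Aᴴ * Uᴴ)ᴴ * (Aᴴ * Uᴴ)).trace = (A * Aᴴ).trace := by
      calc ((Aᴴ * Uᴴ)ᴴ * (Aᴴ * Uᴴ)).trace
          = ((U * A) * (Aᴴ * Uᴴ)).trace := by
            simp only [Matrix.conjTranspose_mul, Matrix.conjTranspose_conjTranspose,
              Matrix.mul_assoc]
        _ = ((Aᴴ * Uᴴ) * (U * A)).trace := Matrix.trace_mul_comm _ _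
        _ = (Aᴴ * A).trace := by
            rw [show (Aᴴ * Uᴴ) * (U * A) = Aᴴ * ((Uᴴ * U) * A) by noncomm_ring, hUU,
              Matrix.one_mul]
        _ = (A * Aᴴ).trace := Matrix.trace_mul_comm _ _
    calc ((U * (A * B)).trace).re = (((Aᴴ * Uᴴ)ᴴ * B).trace).re := by rw [h1]
      _ ≤ Real.sqrt ((((Aᴴ * Uᴴ)ᴴ * (Aᴴ * Uᴴ)).trace).re) * Real.sqrt (((Bᴴ * B).trace).re) :=
          trace_CS _ _
      _ = Real.sqrt (((A * Aᴴ).trace).re) * Real.sqrt (((Bᴴ * B).trace).re) := by rw [h2]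
  have hdecomp : S * R * S - R = (S * Q) * (Q * (S - 1)) + ((S - 1) * Q) * Q := by
    rw [← hQQ]; noncomm_ring
  -- trace identities
  have t1 : ((S * Q) * (S * Q)ᴴ).trace = (Λ * R).trace := by
    rw [Matrix.conjTranspose_mul, hSH, hQH, Matrix.trace_mul_comm,
      show (Q * S) * (S * Q) = (Q * (S * S)) * Q by noncomm_ring, hSS, Matrix.trace_mul_comm,
      show Q * (Q * Λ) = (Q * Q) * Λ by noncomm_ring, hQQ, Matrix.trace_mul_comm]
  have t2 : ((Q * (S - 1))ᴴ * (Q * (S - 1))).trace = (((S - 1) * (S - 1)) * R).trace := by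
    rw [Matrix.conjTranspose_mul, hS1H, hQH, Matrix.trace_mul_comm,
      show (Q * (S - 1)) * ((S - 1) * Q) = (Q * ((S - 1) * (S - 1))) * Q by noncomm_ring,
      Matrix.trace_mul_comm,
      show Q * (Q * ((S - 1) * (S - 1))) = (Q * Q) * ((S - 1) * (S - 1)) by noncomm_ring,
      hQQ, Matrix.trace_mul_comm]
  have t3 : (((S - 1) * Q) * ((S - 1) * Q)ᴴ).trace = (((S - 1) * (S - 1)) * R).trace := by
    rw [Matrix.conjTranspose_mul, hS1H, hQH,
      show ((S - 1) * Q) * (Q * (S - 1)) = (S - 1) * ((Q * Q) * (S - 1)) by noncomm_ring, hQQ,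
      Matrix.trace_mul_comm, show (R * (S - 1)) * (S - 1) = R * ((S - 1) * (S - 1)) by
        noncomm_ring, Matrix.trace_mul_comm]
  have t4 : (Qᴴ * Q).trace = 1 := by rw [hQH, hQQ, hRtr]
  -- bounds
  have hΛR0 : 0 ≤ ((Λ * R).trace).re := trace_mul_psd_re_nonneg hΛ hR
  have hΛR1 : ((Λ * R).trace).re ≤ 1 := by
    have hsplit : (((1 : Matrix d d ℂ) - Λ) * R).trace = R.trace - (Λ * R).trace := by
      rw [Matrix.sub_mul, Matrix.one_mul, Matrix.trace_sub]
    have : s = 1 - ((Λ * R).trace).re := by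
      rw [hsdef, hsplit, hRtr, Complex.sub_re, Complex.one_re]
    linarith
  set t : ℝ := ((((S - 1) * (S - 1)) * R).trace).re with htdef
  have ht0 : 0 ≤ t := by
    apply trace_mul_psd_re_nonneg _ hR
    have := Matrix.posSemidef_conjTranspose_mul_self (S - 1)
    rwa [hS1H] at this
  have hts : t ≤ s := by
    have hSΛ : (S - Λ).PosSemidef := by
      have := sub_sq_psd hΛ.posSemidef_sqrt (by rw [hΛ.sqrt_mul_self]; exact hΛI)
      rwa [← hSdef, hSS] at this
    have h0 : 0 ≤ ((S - Λ) * R).trace.re := trace_mul_psd_re_nonneg hSΛ hR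
    have hmat : ((1 : Matrix d d ℂ) - Λ) = (S - 1) * (S - 1) + (S - Λ) + (S - Λ) := by
      rw [← hSS]; noncomm_ring
    have htr : (((1 : Matrix d d ℂ) - Λ) * R).trace
        = (((S - 1) * (S - 1)) * R).trace + ((S - Λ) * R).trace + ((S - Λ) * R).trace := by
      rw [hmat, Matrix.add_mul, Matrix.add_mul, Matrix.trace_add, Matrix.trace_add]
    have : s = t + ((S - Λ) * R).trace.re + ((S - Λ) * R).trace.re := by
      rw [hsdef, htr, Complex.add_re, Complex.add_re]
    linarith
  -- main chain
  have hTN : traceNorm (S * R * S - R)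
      = ((U * ((S * Q) * (Q * (S - 1)))).trace).re + ((U * (((S - 1) * Q) * Q)).trace).re := by
    rw [traceNorm, hsqrt, hdecomp, Matrix.mul_add, Matrix.trace_add, Complex.add_re]
  rw [hTN]
  have b1 : ((U * ((S * Q) * (Q * (S - 1)))).trace).re ≤ 1 * Real.sqrt t := by
    calc ((U * ((S * Q) * (Q * (S - 1)))).trace).re
        ≤ Real.sqrt ((((S * Q) * (S * Q)ᴴ).trace).re)
          * Real.sqrt ((((Q * (S - 1))ᴴ * (Q * (S - 1))).trace).re) := key _ _
      _ = Real.sqrt (((Λ * R).trace).re) * Real.sqrt t := by rw [t1, t2]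
      _ ≤ 1 * Real.sqrt t := by
          apply mul_le_mul_of_nonneg_right _ (Real.sqrt_nonneg _)
          rw [show (1:ℝ) = Real.sqrt 1 by simp]
          exact Real.sqrt_le_sqrt hΛR1
  have b2 : ((U * (((S - 1) * Q) * Q)).trace).re ≤ Real.sqrt t * 1 := by
    calc ((U * (((S - 1) * Q) * Q)).trace).re
        ≤ Real.sqrt (((((S - 1) * Q) * ((S - 1) * Q)ᴴ).trace).re)
          * Real.sqrt (((Qᴴ * Q).trace).re) := key _ _
      _ = Real.sqrt t * 1 := by rw [t3, t4]; norm_num; rfl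
  have hsq : Real.sqrt t ≤ Real.sqrt s := Real.sqrt_le_sqrt hts
  nlinarith [Real.sqrt_nonneg t, Real.sqrt_nonneg s]


end helpers

/-- Gentle operator lemma for ensembles: if `0 ≤ Λ ≤ I` has overlap at least `1 − ε` with the
ensemble average `ρ̄ = Σ_x p(x) ρ_x`, then `Σ_x p(x) ‖√Λ ρ_x √Λ − ρ_x‖₁ ≤ 2√ε`. -/
theorem gentle_operator_ensemble {X d : Type*} [Fintype X] [Fintype d] [DecidableEq d]
    (p : X → ℝ) (hp : ∀ x, 0 ≤ p x) (hp1 : ∑ x, p x = 1)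
    (ρ : X → Matrix d d ℂ)
    (hρ : ∀ x, (ρ x).PosSemidef ∧ (ρ x).trace = 1)
    (Λ : Matrix d d ℂ) (hΛ : Λ.PosSemidef)
    (hΛI : ((1 : Matrix d d ℂ) - Λ).PosSemidef)
    (ε : ℝ) (hε : 0 ≤ ε)
    (hTr : 1 - ε ≤ ((Λ * ∑ x, (p x : ℂ) • ρ x).trace).re) :
    ∑ x, p x * traceNorm (hΛ.sqrt * ρ x * hΛ.sqrt - ρ x) ≤ 2 * Real.sqrt ε := by
  classical
  set s : X → ℝ := fun x => ((((1 : Matrix d d ℂ) - Λ) * ρ x).trace).re with hsdef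
  have hs0 : ∀ x, 0 ≤ s x := fun x => trace_mul_psd_re_nonneg hΛI (hρ x).1
  -- sum of p x * s x ≤ ε
  have hbar : (∑ x, (p x : ℂ) • ρ x).trace = 1 := by
    rw [Matrix.trace_sum]
    have : ∀ x, ((p x : ℂ) • ρ x).trace = (p x : ℂ) := by
      intro x; rw [Matrix.trace_smul, (hρ x).2, smul_eq_mul, mul_one]
    rw [Finset.sum_congr rfl fun x _ => this x]
    norm_cast
  have hsum_s : ∑ x, p x * s x ≤ ε := by
    have hlin : ∑ x, (p x : ℂ) * ((((1 : Matrix d d ℂ) - Λ) * ρ x).trace)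
        = (((1 : Matrix d d ℂ) - Λ) * ∑ x, (p x : ℂ) • ρ x).trace := by
      rw [Matrix.mul_sum, Matrix.trace_sum]
      congr 1
      funext x
      rw [Matrix.mul_smul, Matrix.trace_smul, smul_eq_mul]
    have hre : ∑ x, p x * s x
        = ((((1 : Matrix d d ℂ) - Λ) * ∑ x, (p x : ℂ) • ρ x).trace).re := by
      rw [← hlin, Complex.re_sum]
      exact Finset.sum_congr rfl fun x _ => (Complex.re_ofReal_mul _ _).symm
    have hsplit : (((1 : Matrix d d ℂ) - Λ) * ∑ x, (p x : ℂ) • ρ x).trace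
        = 1 - (Λ * ∑ x, (p x : ℂ) • ρ x).trace := by
      rw [Matrix.sub_mul, Matrix.one_mul, Matrix.trace_sub, hbar]
    rw [hre, hsplit, Complex.sub_re, Complex.one_re]
    linarith
  -- Jensen / Cauchy-Schwarz
  have hjensen : ∑ x, p x * Real.sqrt (s x) ≤ Real.sqrt ε := by
    have hCS := Finset.sum_mul_sq_le_sq_mul_sq Finset.univ
      (fun x => Real.sqrt (p x)) (fun x => Real.sqrt (p x) * Real.sqrt (s x))
    have he1 : ∀ x, Real.sqrt (p x) * (Real.sqrt (p x) * Real.sqrt (s x))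
        = p x * Real.sqrt (s x) := by
      intro x; rw [← mul_assoc, Real.mul_self_sqrt (hp x)]
    have he2 : ∀ x, Real.sqrt (p x) ^ 2 = p x := fun x => Real.sq_sqrt (hp x)
    have he3 : ∀ x, (Real.sqrt (p x) * Real.sqrt (s x)) ^ 2 = p x * s x := by
      intro x; rw [mul_pow, Real.sq_sqrt (hp x), Real.sq_sqrt (hs0 x)]
    rw [Finset.sum_congr rfl fun x _ => he1 x, Finset.sum_congr rfl fun x _ => he2 x,
      Finset.sum_congr rfl fun x _ => he3 x, hp1, one_mul] at hCS
    have hnn : 0 ≤ ∑ x, p x * Real.sqrt (s x) :=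
      Finset.sum_nonneg fun x _ => mul_nonneg (hp x) (Real.sqrt_nonneg _)
    have : (∑ x, p x * Real.sqrt (s x)) ^ 2 ≤ ε := le_trans hCS hsum_s
    nlinarith [Real.sq_sqrt hε, Real.sqrt_nonneg ε]
  calc ∑ x, p x * traceNorm (hΛ.sqrt * ρ x * hΛ.sqrt - ρ x)
      ≤ ∑ x, p x * (2 * Real.sqrt (s x)) := by
        apply Finset.sum_le_sum
        intro x _
        exact mul_le_mul_of_nonneg_left (gentle_single (hρ x).1 (hρ x).2 hΛ hΛI) (hp x)
    _ = 2 * ∑ x, p x * Real.sqrt (s x) := by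
        rw [Finset.mul_sum]; congr 1; funext x; ring
    _ ≤ 2 * Real.sqrt ε := by linarith
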